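/- Let K be a commutative ring, W₋ and W₊ K-modules, and let B₋ ∈ End(W₋), B₊ ∈ End(W₊), A ∈ Hom(W₊, W₋), a ∈ W₋ (identified with a map K → W₋), b ∈ Hom(W₊, K). On W := W₊ × K define: B'(x, λ) := (B₊x, b(x)); A'(x, λ) := A(x) − λ·a; a' := −B₋(a); b'(x, λ) := −λ; ι(x) := (x, 0); a''(λ) := (0, −λ); b'' := b. Then: (i) B' ∘ ι − ι ∘ B₊ + a'' ∘ b'' = 0 holds identically; and (ii) B₋ ∘ A' − A' ∘ B' + a'·b' = 0 (where a'·b' denotes the map (x,λ) ↦ b'(x,λ)·a') holds if and only if B₋ ∘ A − A ∘ B₊ + a·b = 0 (where a·b is the map x ↦ b(x)·a). -/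
import Mathlib

/-- Moment-map compatibility for the D5 resolution of a separated bow variety with
local charge splitting `w = w' + 1`: with `B'(x,λ) = (B₊x, b x)`,
`A'(x,λ) = A x - λ•a`, `a' = -B₋ a`, `b'(x,λ) = -λ`, `ι x = (x,0)`,
`a'' λ = (0,-λ)`, `b'' = b`, one has (i) `B'∘ι - ι∘B₊ + a''∘b'' = 0` identically,
and (ii) `B₋∘A' - A'∘B' + a'·b' = 0` iff `B₋∘A - A∘B₊ + a·b = 0`. -/
theorem stmt8 {K : Type*} [CommRing K] {Wm Wp : Type*}
    [AddCommGroup Wm] [Module K Wm] [AddCommGroup Wp] [Module K Wp]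
    (Bm : Wm →ₗ[K] Wm) (Bp : Wp →ₗ[K] Wp) (A : Wp →ₗ[K] Wm) (a : Wm) (b : Wp →ₗ[K] K) :
    (∀ x : Wp,
        ((Bp x, b x) : Wp × K) - ((Bp x, 0) : Wp × K) + ((0, -(b x)) : Wp × K) = 0)
    ∧ ((∀ (x : Wp) (l : K),
          Bm (A x - l • a) - (A (Bp x) - b x • a) + (-l) • (-(Bm a)) = 0)
        ↔ (∀ x : Wp, Bm (A x) - A (Bp x) + b x • a = 0)) := by
  constructor
  · intro x
    simp [Prod.ext_iff]
  · constructor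
    · intro h x
      have := h x 0
      simp at this; linear_combination (norm := abel) this
    · intro h x l
      have := h x
      simp [map_sub, map_smul, smul_neg]
      abel_nf
      abel_nf at this
      linear_combination (norm := abel) this
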